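/- Let K and N be positive integers, ε > 0, f₀, x₀, λ ∈ ℝ, f(t) = f₀ + λ·t, and let x : ℕ → ℝ satisfy x(0) = x₀ and x(t+1) = (K·f(t) + N·x(t))/(K+N) for all t ∈ ℕ. If |f(t) − x(t)| ≤ ε for all t ∈ ℕ, then |λ| ≤ K·ε/(K+N) (and, taking t = 0, |f₀ − x₀| ≤ ε). -/

import Mathlib

theorem hk_influence_forever_necessary
    (K N : ℕ) (hK : 0 < K) (hN : 0 < N) (ε : ℝ) (hε : 0 < ε)
    (f₀ x₀ l : ℝ) (f : ℕ → ℝ) (hf : ∀ t : ℕ, f t = f₀ + l * (t : ℝ))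
    (x : ℕ → ℝ) (hx0 : x 0 = x₀)
    (hx : ∀ t : ℕ, x (t + 1) = ((K : ℝ) * f t + (N : ℝ) * x t) / ((K : ℝ) + (N : ℝ)))
    (h : ∀ t : ℕ, |f t - x t| ≤ ε) :
    |l| ≤ (K : ℝ) * ε / ((K : ℝ) + (N : ℝ)) ∧ |f₀ - x₀| ≤ ε := by
  have hKpos : (0:ℝ) < K := by exact_mod_cast hK
  have hNpos : (0:ℝ) < N := by exact_mod_cast hN
  have hKN : (0:ℝ) < (K:ℝ) + N := by linarith
  set r : ℝ := (N:ℝ) / ((K:ℝ) + N) with hr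
  have hr0 : 0 ≤ r := by positivity
  have hr1 : r < 1 := by
    rw [hr, div_lt_one hKN]; linarith
  have hc : 0 < 1 - r := by linarith
  set g : ℕ → ℝ := fun t => f t - x t with hg
  have hrec : ∀ t, g (t+1) = l + r * g t := by
    intro t
    have hne : ((K:ℝ) + N) ≠ 0 := ne_of_gt hKN
    simp only [hg, hf, hx, hr]
    push_cast
    field_simp
    ring
  have hclosed : ∀ t, g t = r ^ t * g 0 + l * (1 - r ^ t) / (1 - r) := by
    intro t
    induction t with
    | zero => simp
    | succ t ih =>
      rw [hrec t, ih]
      have hne : (1 - r) ≠ 0 := ne_of_gt hc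
      field_simp
      ring
  have key : ∀ t, |l| * (1 - r ^ t) / (1 - r) ≤ ε + r ^ t * ε := by
    intro t
    have hrt0 : 0 ≤ r ^ t := pow_nonneg hr0 t
    have hrt1 : r ^ t ≤ 1 := pow_le_one₀ hr0 (le_of_lt hr1)
    have h1 : |l * (1 - r ^ t) / (1 - r)| ≤ |g t| + r ^ t * |g 0| := by
      have : l * (1 - r ^ t) / (1 - r) = g t - r ^ t * g 0 := by
        rw [hclosed t]; ring
      rw [this]
      calc |g t - r ^ t * g 0| ≤ |g t| + |r ^ t * g 0| := abs_sub _ _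
        _ = |g t| + r ^ t * |g 0| := by rw [abs_mul, abs_of_nonneg hrt0]
    have h2 : |l * (1 - r ^ t) / (1 - r)| = |l| * (1 - r ^ t) / (1 - r) := by
      rw [abs_div, abs_mul, abs_of_nonneg (by linarith : (0:ℝ) ≤ 1 - r ^ t),
        abs_of_pos hc]
    have h3 : |g t| ≤ ε := h t
    have h4 : r ^ t * |g 0| ≤ r ^ t * ε := by
      exact mul_le_mul_of_nonneg_left (h 0) hrt0
    linarith [h1, h2.symm ▸ h1]
  have hlim : Filter.Tendsto (fun t : ℕ => r ^ t) Filter.atTop (nhds 0) :=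
    tendsto_pow_atTop_nhds_zero_of_lt_one hr0 hr1
  have hLHS : Filter.Tendsto (fun t : ℕ => |l| * (1 - r ^ t) / (1 - r))
      Filter.atTop (nhds (|l| / (1 - r))) := by
    have : Filter.Tendsto (fun t : ℕ => |l| * (1 - r ^ t) / (1 - r))
        Filter.atTop (nhds (|l| * (1 - 0) / (1 - r))) := by
      exact (((tendsto_const_nhds.sub hlim).const_mul |l|).div_const (1 - r))
    simpa using this
  have hRHS : Filter.Tendsto (fun t : ℕ => ε + r ^ t * ε)
      Filter.atTop (nhds ε) := by
    have : Filter.Tendsto (fun t : ℕ => ε + r ^ t * ε)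
        Filter.atTop (nhds (ε + 0 * ε)) :=
      tendsto_const_nhds.add (hlim.mul_const ε)
    simpa using this
  have hmain : |l| / (1 - r) ≤ ε :=
    le_of_tendsto_of_tendsto' hLHS hRHS key
  constructor
  · have h1r : 1 - r = (K:ℝ) / ((K:ℝ) + N) := by
      rw [hr]; field_simp; ring
    rw [div_le_iff₀ hc] at hmain
    rw [h1r] at hmain
    calc |l| ≤ ε * ((K:ℝ) / ((K:ℝ) + N)) := hmain
      _ = (K:ℝ) * ε / ((K:ℝ) + N) := by ring
  · have := h 0
    simpa [hg, hf 0, hx0] using this
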